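/- arXiv:1705.03310 — 4 statements merged into one kernel-verified Lean document; each statement's English description precedes it below -/
import Mathlib

section
/- Let d ≥ 2 be an integer and let α ∈ (0,2) satisfy 2α < d. Then for every x ∈ ℝ^d with x ≠ 0, the convolution integral ∫_{ℝ^d} |x−y|^{α−d} |y|^{−2α} dy converges and one has s(α,d) · ((d−2α)/(d−α)) · (Γ((d−α)/2)/(π^{d/2} 2^α Γ(α/2))) · ∫_{ℝ^d} |x−y|^{α−d} |y|^{−2α} dy = |x|^{−α}. (This identity expresses that u_C(x) = s(α,d)|x|^{−α} is a stationary solution of the parabolic–elliptic Keller–Segel system with fractional diffusion of order α, via the Riesz potential ℐ_α, the inverse of (−Δ)^{α/2}.) -/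
open MeasureTheory Real Set
open scoped ENNReal

namespace RieszAux

lemma gamma_int {a r : ℝ} (ha : 0 < a) (hr : 0 < r) :
    ∫ t in Ioi (0:ℝ), t ^ (a - 1) * rexp (-(r * t)) = r ^ (-a) * Gamma a := by
  rw [integral_rpow_mul_exp_neg_mul_Ioi ha hr, one_div, Real.inv_rpow hr.le,
    ← Real.rpow_neg hr.le]

lemma gamma_integrable {a r : ℝ} (ha : 0 < a) (hr : 0 < r) :
    IntegrableOn (fun t : ℝ => t ^ (a - 1) * rexp (-(r * t))) (Ioi 0) := by
  have h0 : IntegrableOn (fun x : ℝ => rexp (-x) * x ^ (a - 1)) (Ioi 0) :=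
    Real.GammaIntegral_convergent ha
  have h1 : IntegrableOn (fun x : ℝ => rexp (-(r * x)) * (r * x) ^ (a - 1)) (Ioi 0) := by
    have := (integrableOn_Ioi_comp_mul_left_iff
      (fun x : ℝ => rexp (-x) * x ^ (a - 1)) 0 hr).2 (by simpa using h0)
    simpa using this
  have h2 := h1.const_mul (r ^ (a - 1))⁻¹
  apply IntegrableOn.congr_fun h2 ?_ measurableSet_Ioi
  intro x hx
  have hx0 : 0 < x := hx
  simp only
  rw [Real.mul_rpow hr.le hx0.le]
  field_simp [ne_of_gt (Real.rpow_pos_of_pos hr (a-1))]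

lemma gamma_lint {a r : ℝ} (ha : 0 < a) (hr : 0 < r) :
    ∫⁻ t in Ioi (0:ℝ), ENNReal.ofReal (t ^ (a - 1) * rexp (-(r * t)))
      = ENNReal.ofReal (r ^ (-a) * Gamma a) := by
  rw [← ofReal_integral_eq_lintegral_ofReal (gamma_integrable ha hr)
      ((ae_restrict_iff' measurableSet_Ioi).2 (Filter.Eventually.of_forall
        fun x hx => mul_nonneg (Real.rpow_nonneg (le_of_lt hx) _) (Real.exp_nonneg _))),
    gamma_int ha hr]

lemma lintegral_Ioi_comp_mul_left {f : ℝ → ℝ≥0∞} (hf : Measurable f) {t : ℝ} (ht : 0 < t) :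
    ∫⁻ u in Ioi (0:ℝ), f u = ENNReal.ofReal t * ∫⁻ v in Ioi (0:ℝ), f (t * v) := by
  have hpre : (fun v : ℝ => t * v) ⁻¹' Ioi 0 = Ioi 0 := by
    ext v; simp only [Set.mem_preimage, Set.mem_Ioi]
    constructor
    · intro h; by_contra hv; exact absurd h (not_lt.2 (mul_nonpos_of_nonneg_of_nonpos ht.le (not_lt.1 hv)))
    · intro h; exact mul_pos ht h
  have hmm : Measure.map (fun v : ℝ => t * v) (volume.restrict (Ioi 0))
      = ENNReal.ofReal |t⁻¹| • volume.restrict (Ioi 0) := by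
    conv_lhs => rw [← hpre]
    rw [← Measure.restrict_map (measurable_const_mul t) measurableSet_Ioi,
      Real.map_volume_mul_left (ne_of_gt ht), Measure.restrict_smul]
  have key : ∫⁻ v in Ioi (0:ℝ), f (t * v)
      = ENNReal.ofReal t⁻¹ * ∫⁻ u in Ioi (0:ℝ), f u := by
    rw [← lintegral_map hf (measurable_const_mul t), hmm, lintegral_smul_measure,
      abs_of_pos (inv_pos.2 ht), smul_eq_mul]
  rw [key, ← mul_assoc, ← ENNReal.ofReal_mul ht.le, mul_inv_cancel₀ (ne_of_gt ht)]
  simp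

end RieszAux

namespace RieszAux2
open RieszAux Function

lemma beta_lint {a b : ℝ} (ha : 0 < a) (hb : 0 < b) :
    ∫⁻ v in Ioi (0:ℝ), ENNReal.ofReal (v ^ (a - 1) * (1 + v) ^ (-(a + b)))
      = ENNReal.ofReal (Gamma a * Gamma b / Gamma (a + b)) := by
  have hab : 0 < a + b := by linarith
  have hG : 0 < Gamma (a + b) := Gamma_pos_of_pos hab
  have key : ENNReal.ofReal (Gamma (a + b))
      * ∫⁻ v in Ioi (0:ℝ), ENNReal.ofReal (v ^ (a - 1) * (1 + v) ^ (-(a + b)))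
      = ENNReal.ofReal (Gamma a * Gamma b) := by
    rw [← lintegral_const_mul' _ _ ENNReal.ofReal_ne_top]
    have step1 : ∀ v ∈ Ioi (0:ℝ),
        ENNReal.ofReal (Gamma (a+b)) * ENNReal.ofReal (v ^ (a - 1) * (1 + v) ^ (-(a + b)))
        = ∫⁻ t in Ioi (0:ℝ),
            ENNReal.ofReal (v ^ (a-1) * (t ^ (a+b-1) * rexp (-((1+v)*t)))) := by
      intro v hv
      have hv0 : (0:ℝ) < v := hv
      have h1v : (0:ℝ) < 1 + v := by linarith
      have := gamma_lint hab h1v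
      calc ENNReal.ofReal (Gamma (a+b)) * ENNReal.ofReal (v ^ (a - 1) * (1 + v) ^ (-(a + b)))
          = ENNReal.ofReal (v ^ (a-1)) * ENNReal.ofReal ((1+v) ^ (-(a+b)) * Gamma (a+b)) := by
            rw [← ENNReal.ofReal_mul (Gamma_pos_of_pos hab).le,
              ← ENNReal.ofReal_mul (Real.rpow_nonneg hv0.le _)]
            ring_nf
        _ = ENNReal.ofReal (v ^ (a-1)) * ∫⁻ t in Ioi (0:ℝ),
              ENNReal.ofReal (t ^ (a+b-1) * rexp (-((1+v)*t))) := by rw [this]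
        _ = ∫⁻ t in Ioi (0:ℝ),
              ENNReal.ofReal (v ^ (a-1) * (t ^ (a+b-1) * rexp (-((1+v)*t)))) := by
            rw [← lintegral_const_mul' _ _ ENNReal.ofReal_ne_top]
            refine setLIntegral_congr_fun measurableSet_Ioi (?_)
            intro t ht
            beta_reduce
            rw [← ENNReal.ofReal_mul (Real.rpow_nonneg hv0.le _)]
    rw [setLIntegral_congr_fun measurableSet_Ioi
      (step1)]
    have hmeas : AEMeasurable (uncurry fun v t : ℝ =>
        ENNReal.ofReal (v ^ (a-1) * (t ^ (a+b-1) * rexp (-((1+v)*t)))))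
        ((volume.restrict (Ioi 0)).prod (volume.restrict (Ioi 0))) := by
      apply Measurable.aemeasurable; fun_prop
    rw [lintegral_lintegral_swap hmeas]
    have step2 : ∀ t ∈ Ioi (0:ℝ),
        ∫⁻ v in Ioi (0:ℝ),
            ENNReal.ofReal (v ^ (a-1) * (t ^ (a+b-1) * rexp (-((1+v)*t))))
        = ENNReal.ofReal (Gamma a) * ENNReal.ofReal (t ^ (b-1) * rexp (-(1*t))) := by
      intro t ht
      have ht0 : (0:ℝ) < t := ht
      have hre : ∀ v ∈ Ioi (0:ℝ), ENNReal.ofReal (v ^ (a-1) * (t ^ (a+b-1) * rexp (-((1+v)*t))))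
          = ENNReal.ofReal (t ^ (a+b-1) * rexp (-t)) * ENNReal.ofReal (v ^ (a-1) * rexp (-(t*v))) := by
        intro v hv
        have hv0 : (0:ℝ) < v := hv
        rw [← ENNReal.ofReal_mul (by positivity)]
        congr 1
        rw [show -((1+v)*t) = -t + -(t*v) by ring, Real.exp_add]
        ring
      rw [setLIntegral_congr_fun measurableSet_Ioi (hre),
        lintegral_const_mul' _ _ ENNReal.ofReal_ne_top, gamma_lint ha ht0,
        ← ENNReal.ofReal_mul (by positivity), ← ENNReal.ofReal_mul (by positivity)]
      have : t ^ (a+b-1) * rexp (-t) * (t ^ (-a) * Gamma a)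
          = Gamma a * ((t ^ (a+b-1) * t ^ (-a)) * rexp (-(1*t))) := by ring_nf
      rw [this, ← Real.rpow_add ht0]
      ring_nf
    rw [setLIntegral_congr_fun measurableSet_Ioi (step2),
      lintegral_const_mul' _ _ ENNReal.ofReal_ne_top, gamma_lint hb one_pos,
      Real.one_rpow, ← ENNReal.ofReal_mul (Gamma_pos_of_pos ha).le]
    ring_nf
  have h2 : ENNReal.ofReal (Gamma a * Gamma b)
      = ENNReal.ofReal (Gamma (a+b)) * ENNReal.ofReal (Gamma a * Gamma b / Gamma (a+b)) := by
    rw [← ENNReal.ofReal_mul hG.le, mul_div_cancel₀ _ (ne_of_gt hG)]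
  rw [h2] at key
  exact (ENNReal.mul_right_inj (by simp [hG]) ENNReal.ofReal_ne_top).1 key

end RieszAux2

namespace RieszAux3
open scoped RealInnerProductSpace
variable {d : ℕ}

lemma integrable_gauss {b : ℝ} (hb : 0 < b) (m : EuclideanSpace ℝ (Fin d)) :
    Integrable (fun y : EuclideanSpace ℝ (Fin d) => rexp (-(b * ‖y - m‖^2))) := by
  have h0 : Integrable (fun y : EuclideanSpace ℝ (Fin d) => rexp (-(b * ‖y‖^2))) := by
    have h := (GaussianFourier.integrable_cexp_neg_mul_sq_norm_add (V := EuclideanSpace ℝ (Fin d))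
      (b := (b:ℂ)) (by simpa using hb) 0 0).norm
    refine h.congr (Filter.Eventually.of_forall fun y => ?_)
    simp only [Complex.norm_exp]
    congr 1
    simp [← Complex.ofReal_pow]
  exact h0.comp_sub_right m

lemma gauss_lint {b : ℝ} (hb : 0 < b) (m : EuclideanSpace ℝ (Fin d)) :
    ∫⁻ y : EuclideanSpace ℝ (Fin d), ENNReal.ofReal (rexp (-(b * ‖y - m‖^2)))
      = ENNReal.ofReal ((π / b) ^ ((d:ℝ) / 2)) := by
  rw [← ofReal_integral_eq_lintegral_ofReal (integrable_gauss hb m)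
    (Filter.Eventually.of_forall fun y => (Real.exp_nonneg _))]
  congr 1
  rw [integral_sub_right_eq_self (fun y : EuclideanSpace ℝ (Fin d) => rexp (-(b * ‖y‖^2))) m]
  have h := GaussianFourier.integral_rexp_neg_mul_sq_norm (V := EuclideanSpace ℝ (Fin d)) hb
  rw [finrank_euclideanSpace_fin] at h
  simp only [neg_mul] at h
  exact h

lemma sq_split {t u : ℝ} (ht : 0 < t) (hu : 0 < u) (x y : EuclideanSpace ℝ (Fin d)) :
    ‖x - y‖^2 * t + ‖y‖^2 * u
      = (t + u) * ‖y - (t/(t+u)) • x‖^2 + t*u/(t+u) * ‖x‖^2 := by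
  have htu : (0:ℝ) < t + u := by linarith
  have h1 : ‖x - y‖^2 = ‖x‖^2 - 2*⟪x,y⟫ + ‖y‖^2 := norm_sub_sq_real x y
  have h2 : ‖y - (t/(t+u)) • x‖^2
      = ‖y‖^2 - 2*((t/(t+u))*⟪x,y⟫) + (t/(t+u))^2*‖x‖^2 := by
    rw [norm_sub_sq_real, real_inner_smul_right, real_inner_comm, norm_smul]
    rw [mul_pow, Real.norm_eq_abs, sq_abs]
  rw [h1, h2]
  field_simp
  ring

end RieszAux3

namespace RieszAux4
open RieszAux RieszAux2 RieszAux3 Function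

variable {d : ℕ}

lemma inner_y {t u : ℝ} (ht : 0 < t) (hu : 0 < u) (x : EuclideanSpace ℝ (Fin d)) :
    ∫⁻ y : EuclideanSpace ℝ (Fin d), ENNReal.ofReal (rexp (-(‖x - y‖^2 * t + ‖y‖^2 * u)))
      = ENNReal.ofReal ((π / (t+u)) ^ ((d:ℝ)/2) * rexp (-(t*u/(t+u) * ‖x‖^2))) := by
  have htu : (0:ℝ) < t + u := by linarith
  have hsplit : ∀ y : EuclideanSpace ℝ (Fin d),
      rexp (-(‖x - y‖^2 * t + ‖y‖^2 * u))
      = rexp (-((t+u) * ‖y - (t/(t+u)) • x‖^2)) * rexp (-(t*u/(t+u) * ‖x‖^2)) := by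
    intro y
    rw [sq_split ht hu x y, neg_add, Real.exp_add]
  simp_rw [hsplit, ENNReal.ofReal_mul (Real.exp_nonneg _)]
  rw [lintegral_mul_const' _ _ ENNReal.ofReal_ne_top, gauss_lint htu,
    ← ENNReal.ofReal_mul (by positivity)]

set_option maxHeartbeats 1600000 in
lemma riesz_lint (hd : 2 ≤ d) {α : ℝ} (hα1 : 0 < α) (hα2 : α < 2) (h2α : 2 * α < d)
    (x : EuclideanSpace ℝ (Fin d)) (hx : x ≠ 0) :
    ∫⁻ y : EuclideanSpace ℝ (Fin d), ENNReal.ofReal (‖x - y‖ ^ (α - d) * ‖y‖ ^ (-(2 * α)))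
      = ENNReal.ofReal (π ^ ((d:ℝ)/2) * Gamma (α/2)^2 * Gamma (((d:ℝ) - 2*α)/2)
          / (Gamma (((d:ℝ) - α)/2)^2 * Gamma α) * ‖x‖ ^ (-α)) := by
  have hd2 : (2:ℝ) ≤ d := by exact_mod_cast hd
  have hda : 0 < (d:ℝ) - α := by linarith
  have hd2a : 0 < (d:ℝ) - 2*α := by linarith
  have ha1 : 0 < ((d:ℝ) - α)/2 := by linarith
  have hx0 : (0:ℝ) < ‖x‖ := norm_pos_iff.2 hx
  have hc : (0:ℝ) < ‖x‖^2 := by positivity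
  set Γ1 := Gamma (((d:ℝ) - α)/2) with hΓ1def
  set Γ2 := Gamma α with hΓ2def
  set Γ3 := Gamma (α/2) with hΓ3def
  set Γ4 := Gamma (((d:ℝ) - 2*α)/2) with hΓ4def
  have hΓ1 : 0 < Γ1 := Gamma_pos_of_pos ha1
  have hΓ2 : 0 < Γ2 := Gamma_pos_of_pos hα1
  have hΓ3 : 0 < Γ3 := Gamma_pos_of_pos (by linarith)
  have hΓ4 : 0 < Γ4 := Gamma_pos_of_pos (by linarith)
  -- the subordinated integrand
  set Φ : EuclideanSpace ℝ (Fin d) → ℝ → ℝ → ℝ≥0∞ := fun y t u =>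
    ENNReal.ofReal ((t ^ (((d:ℝ) - α)/2 - 1) * rexp (-(‖x - y‖^2 * t)))
      * (u ^ (α - 1) * rexp (-(‖y‖^2 * u)))) with hΦdef
  -- Step A: pointwise subordination
  have claimA : ∀ y : EuclideanSpace ℝ (Fin d), y ≠ 0 → y ≠ x →
      ENNReal.ofReal (Γ1 * Γ2) * ENNReal.ofReal (‖x - y‖ ^ (α - d) * ‖y‖ ^ (-(2 * α)))
      = ∫⁻ t in Set.Ioi (0:ℝ), ∫⁻ u in Set.Ioi (0:ℝ), Φ y t u := by
    intro y hy0 hyx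
    have hxy : (0:ℝ) < ‖x - y‖ := norm_pos_iff.2 (sub_ne_zero.2 (Ne.symm hyx))
    have hy : (0:ℝ) < ‖y‖ := norm_pos_iff.2 hy0
    have e1 : ((‖x - y‖^2 : ℝ)) ^ (-(((d:ℝ) - α)/2)) = ‖x - y‖ ^ (α - (d:ℝ)) := by
      rw [← Real.rpow_natCast ‖x - y‖ 2, ← Real.rpow_mul (norm_nonneg _)]
      congr 1
      push_cast; ring
    have e2 : ((‖y‖^2 : ℝ)) ^ (-α) = ‖y‖ ^ (-(2*α)) := by
      rw [← Real.rpow_natCast ‖y‖ 2, ← Real.rpow_mul (norm_nonneg _)]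
      congr 1
      push_cast; ring
    have g1 := gamma_lint ha1 (show (0:ℝ) < ‖x - y‖^2 by positivity)
    have g2 := gamma_lint hα1 (show (0:ℝ) < ‖y‖^2 by positivity)
    rw [e1] at g1
    rw [e2] at g2
    have nn1 : (0:ℝ) ≤ ‖x - y‖ ^ (α - (d:ℝ)) * Γ1 :=
      mul_nonneg (Real.rpow_nonneg (norm_nonneg _) _) hΓ1.le
    calc ENNReal.ofReal (Γ1 * Γ2) * ENNReal.ofReal (‖x - y‖ ^ (α - (d:ℝ)) * ‖y‖ ^ (-(2 * α)))
        = ENNReal.ofReal ((‖x - y‖ ^ (α - (d:ℝ)) * Γ1) * (‖y‖ ^ (-(2*α)) * Γ2)) := by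
          rw [← ENNReal.ofReal_mul (mul_nonneg hΓ1.le hΓ2.le)]
          congr 1
          ring
      _ = ENNReal.ofReal (‖x - y‖ ^ (α - (d:ℝ)) * Γ1) * ENNReal.ofReal (‖y‖ ^ (-(2*α)) * Γ2) :=
          ENNReal.ofReal_mul nn1
      _ = (∫⁻ t in Set.Ioi (0:ℝ),
            ENNReal.ofReal (t ^ (((d:ℝ) - α)/2 - 1) * rexp (-(‖x - y‖^2 * t))))
          * ENNReal.ofReal (‖y‖ ^ (-(2*α)) * Γ2) := by rw [← g1]
      _ = ∫⁻ t in Set.Ioi (0:ℝ),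
            ENNReal.ofReal (t ^ (((d:ℝ) - α)/2 - 1) * rexp (-(‖x - y‖^2 * t)))
          * ENNReal.ofReal (‖y‖ ^ (-(2*α)) * Γ2) := by
          rw [lintegral_mul_const' _ _ ENNReal.ofReal_ne_top]
      _ = ∫⁻ t in Set.Ioi (0:ℝ), ∫⁻ u in Set.Ioi (0:ℝ), Φ y t u := by
          refine setLIntegral_congr_fun measurableSet_Ioi (?_)
          intro t htp
          beta_reduce
          rw [← g2, ← lintegral_const_mul' _ _ ENNReal.ofReal_ne_top]
          refine setLIntegral_congr_fun measurableSet_Ioi (?_)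
          intro u hup
          simp only [hΦdef]
          rw [← ENNReal.ofReal_mul
            (mul_nonneg (Real.rpow_nonneg (le_of_lt htp) _) (Real.exp_nonneg _))]

  have hmeasΦ : Measurable (fun z : EuclideanSpace ℝ (Fin d) × (ℝ × ℝ) => Φ z.1 z.2.1 z.2.2) := by
    simp only [hΦdef]; fun_prop
  have hae : ∀ᵐ y : EuclideanSpace ℝ (Fin d), y ≠ 0 ∧ y ≠ x := by
    haveI : Nontrivial (EuclideanSpace ℝ (Fin d)) := by
      refine Module.nontrivial_of_finrank_pos (R := ℝ) ?_
      rw [finrank_euclideanSpace_fin]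
      omega
    have h0 : volume ({0, x} : Set (EuclideanSpace ℝ (Fin d))) = 0 := by
      refine measure_union_null (measure_singleton 0) (measure_singleton x)
    refine (ae_iff.2 ?_)
    refine measure_mono_null ?_ h0
    intro y hy
    simp only [Set.mem_setOf_eq, not_and_or, not_not] at hy
    rcases hy with h | h
    · exact Or.inl h
    · exact Or.inr h
  set c := ‖x‖^2 with hcdef
  set g : ℝ → ℝ → ℝ := fun t u =>
    t ^ (((d:ℝ) - α)/2 - 1) * u ^ (α - 1) * (t+u) ^ (-((d:ℝ)/2))
      * rexp (-(t*u/(t+u) * c)) with hgdef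
  have claimB : ENNReal.ofReal (Γ1 * Γ2)
      * ∫⁻ y : EuclideanSpace ℝ (Fin d), ENNReal.ofReal (‖x - y‖ ^ (α - d) * ‖y‖ ^ (-(2 * α)))
      = ∫⁻ t in Set.Ioi (0:ℝ), ∫⁻ u in Set.Ioi (0:ℝ),
          ∫⁻ y : EuclideanSpace ℝ (Fin d), Φ y t u := by
    rw [← lintegral_const_mul' _ _ ENNReal.ofReal_ne_top,
      lintegral_congr_ae (hae.mono fun y hy => claimA y hy.1 hy.2)]
    set μ := volume.restrict (Set.Ioi (0:ℝ))
    have h1 : ∀ y : EuclideanSpace ℝ (Fin d),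
        (∫⁻ t in Set.Ioi (0:ℝ), ∫⁻ u in Set.Ioi (0:ℝ), Φ y t u)
        = ∫⁻ p : ℝ × ℝ, Φ y p.1 p.2 ∂(μ.prod μ) := by
      intro y
      exact (lintegral_prod _
        ((hmeasΦ.comp (measurable_const.prodMk measurable_id)).aemeasurable)).symm
    rw [lintegral_congr h1]
    rw [lintegral_lintegral_swap (Measurable.aemeasurable
      (show Measurable (uncurry fun (y : EuclideanSpace ℝ (Fin d)) (p : ℝ × ℝ) => Φ y p.1 p.2)
        from hmeasΦ))]
    rw [lintegral_prod _ ((Measurable.lintegral_prod_right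
      (show Measurable (uncurry fun (p : ℝ × ℝ) (y : EuclideanSpace ℝ (Fin d)) => Φ y p.1 p.2)
        from hmeasΦ.comp measurable_swap)).aemeasurable)]
  have claimC : ∀ t ∈ Set.Ioi (0:ℝ), ∀ u ∈ Set.Ioi (0:ℝ),
      (∫⁻ y : EuclideanSpace ℝ (Fin d), Φ y t u)
      = ENNReal.ofReal (π ^ ((d:ℝ)/2)) * ENNReal.ofReal (g t u) := by
    intro t ht u hu
    have ht0 : (0:ℝ) < t := ht
    have hu0 : (0:ℝ) < u := hu
    have htu : (0:ℝ) < t + u := by linarith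
    have hre : ∀ y : EuclideanSpace ℝ (Fin d), Φ y t u
        = ENNReal.ofReal (t ^ (((d:ℝ) - α)/2 - 1) * u ^ (α - 1))
          * ENNReal.ofReal (rexp (-(‖x - y‖^2 * t + ‖y‖^2 * u))) := by
      intro y
      simp only [hΦdef]
      rw [← ENNReal.ofReal_mul
        (mul_nonneg (Real.rpow_nonneg ht0.le _) (Real.rpow_nonneg hu0.le _))]
      congr 1
      rw [neg_add, Real.exp_add]
      ring
    simp_rw [hre]
    rw [lintegral_const_mul' _ _ ENNReal.ofReal_ne_top, inner_y ht0 hu0 x]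
    rw [← ENNReal.ofReal_mul
      (mul_nonneg (Real.rpow_nonneg ht0.le _) (Real.rpow_nonneg hu0.le _)),
      ← ENNReal.ofReal_mul (Real.rpow_nonneg pi_pos.le _)]
    congr 1
    have hsp : (π/(t+u))^((d:ℝ)/2) = π^((d:ℝ)/2) * (t+u)^(-((d:ℝ)/2)) := by
      rw [Real.div_rpow pi_pos.le htu.le, Real.rpow_neg htu.le, div_eq_mul_inv]
    rw [hsp, hgdef]
    ring
  have step1 : ENNReal.ofReal (Γ1 * Γ2)
      * ∫⁻ y : EuclideanSpace ℝ (Fin d), ENNReal.ofReal (‖x - y‖ ^ (α - d) * ‖y‖ ^ (-(2 * α)))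
      = ENNReal.ofReal (π ^ ((d:ℝ)/2)) * ∫⁻ t in Set.Ioi (0:ℝ), ∫⁻ u in Set.Ioi (0:ℝ),
          ENNReal.ofReal (g t u) := by
    rw [claimB, ← lintegral_const_mul' _ _ ENNReal.ofReal_ne_top]
    refine setLIntegral_congr_fun measurableSet_Ioi (fun t ht => ?_)
    rw [← lintegral_const_mul' _ _ ENNReal.ofReal_ne_top]
    exact setLIntegral_congr_fun measurableSet_Ioi
      (fun u hu => claimC t ht u hu)
  set h : ℝ → ℝ → ℝ := fun v t =>
    (v ^ (α - 1) * (1+v) ^ (-((d:ℝ)/2))) * (t ^ (α/2 - 1) * rexp (-(v/(1+v) * c * t)))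
    with hhdef
  have claimD : ∀ t ∈ Set.Ioi (0:ℝ),
      (∫⁻ u in Set.Ioi (0:ℝ), ENNReal.ofReal (g t u))
      = ∫⁻ v in Set.Ioi (0:ℝ), ENNReal.ofReal (h v t) := by
    intro t ht
    have ht0 : (0:ℝ) < t := ht
    rw [lintegral_Ioi_comp_mul_left (by simp only [hgdef]; fun_prop) ht0,
      ← lintegral_const_mul' _ _ ENNReal.ofReal_ne_top]
    refine setLIntegral_congr_fun measurableSet_Ioi (fun v hv => ?_)
    have hv0 : (0:ℝ) < v := hv
    have h1v : (0:ℝ) < 1 + v := by linarith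
    rw [← ENNReal.ofReal_mul ht0.le]
    congr 1
    simp only [hgdef, hhdef]
    rw [show t + t*v = t*(1+v) by ring, Real.mul_rpow ht0.le hv0.le,
      Real.mul_rpow ht0.le h1v.le,
      show t*(t*v)/(t*(1+v)) * c = v/(1+v) * c * t by field_simp]
    have e5 : t ^ ((1:ℝ) + ((((d:ℝ) - α)/2 - 1) + ((α - 1) + (-((d:ℝ)/2)))))
        = t * (t ^ (((d:ℝ) - α)/2 - 1) * (t ^ (α - 1) * t ^ (-((d:ℝ)/2)))) := by
      rw [Real.rpow_add ht0, Real.rpow_add ht0, Real.rpow_add ht0, Real.rpow_one]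
    have e6 : (1:ℝ) + ((((d:ℝ) - α)/2 - 1) + ((α - 1) + (-((d:ℝ)/2)))) = α/2 - 1 := by ring
    rw [e6] at e5
    rw [e5]
    ring
  have hβ : 0 < α/2 := by linarith
  have hβ2 : 0 < ((d:ℝ) - 2*α)/2 := by linarith
  have claimE : ∀ v ∈ Set.Ioi (0:ℝ),
      (∫⁻ t in Set.Ioi (0:ℝ), ENNReal.ofReal (h v t))
      = ENNReal.ofReal (Γ3 * c ^ (-(α/2)))
        * ENNReal.ofReal (v ^ (α/2 - 1) * (1+v) ^ (-(α/2 + ((d:ℝ) - 2*α)/2))) := by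
    intro v hv
    have hv0 : (0:ℝ) < v := hv
    have h1v : (0:ℝ) < 1 + v := by linarith
    have hlam : (0:ℝ) < v/(1+v) * c := by positivity
    have hint : ∀ t, ENNReal.ofReal (h v t)
        = ENNReal.ofReal (v ^ (α - 1) * (1+v) ^ (-((d:ℝ)/2)))
          * ENNReal.ofReal (t ^ (α/2 - 1) * rexp (-(v/(1+v) * c * t))) := by
      intro t
      simp only [hhdef]
      rw [← ENNReal.ofReal_mul
        (mul_nonneg (Real.rpow_nonneg hv0.le _) (Real.rpow_nonneg h1v.le _))]
    simp_rw [hint]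
    rw [lintegral_const_mul' _ _ ENNReal.ofReal_ne_top, gamma_lint hβ hlam,
      ← ENNReal.ofReal_mul
        (mul_nonneg (Real.rpow_nonneg hv0.le _) (Real.rpow_nonneg h1v.le _)),
      ← ENNReal.ofReal_mul (mul_nonneg hΓ3.le (Real.rpow_nonneg hc.le _))]
    congr 1
    have e7 : (v/(1+v) * c) ^ (-(α/2)) = v ^ (-(α/2)) * (1+v) ^ (α/2) * c ^ (-(α/2)) := by
      rw [Real.mul_rpow (by positivity) hc.le, Real.div_rpow hv0.le h1v.le,
        Real.rpow_neg h1v.le, div_eq_mul_inv, inv_inv]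
    rw [e7]
    have e8 : v ^ (α - 1) * v ^ (-(α/2)) = v ^ (α/2 - 1) := by
      rw [← Real.rpow_add hv0]; congr 1; ring
    have e9 : (1+v) ^ (-((d:ℝ)/2)) * (1+v) ^ (α/2) = (1+v) ^ (-(α/2 + ((d:ℝ) - 2*α)/2)) := by
      rw [← Real.rpow_add h1v]; congr 1; ring
    calc v ^ (α - 1) * (1+v) ^ (-((d:ℝ)/2)) * (v ^ (-(α/2)) * (1+v) ^ (α/2) * c ^ (-(α/2)) * Γ3)
        = (v ^ (α - 1) * v ^ (-(α/2))) * ((1+v) ^ (-((d:ℝ)/2)) * (1+v) ^ (α/2))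
          * (c ^ (-(α/2)) * Γ3) := by ring
      _ = Γ3 * c ^ (-(α/2)) * (v ^ (α/2 - 1) * (1+v) ^ (-(α/2 + ((d:ℝ) - 2*α)/2))) := by
          rw [e8, e9]; ring
  have swapDE : (∫⁻ t in Set.Ioi (0:ℝ), ∫⁻ v in Set.Ioi (0:ℝ), ENNReal.ofReal (h v t))
      = ∫⁻ v in Set.Ioi (0:ℝ), ∫⁻ t in Set.Ioi (0:ℝ), ENNReal.ofReal (h v t) := by
    exact lintegral_lintegral_swap (Measurable.aemeasurable
      (by simp only [hhdef]; fun_prop :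
        Measurable (uncurry fun (t v : ℝ) => ENNReal.ofReal (h v t))))
  have step2 : (∫⁻ t in Set.Ioi (0:ℝ), ∫⁻ u in Set.Ioi (0:ℝ), ENNReal.ofReal (g t u))
      = ENNReal.ofReal (Γ3 * c ^ (-(α/2))) * ENNReal.ofReal (Γ3 * Γ4 / Γ1) := by
    rw [setLIntegral_congr_fun measurableSet_Ioi (claimD), swapDE,
      setLIntegral_congr_fun measurableSet_Ioi (claimE),
      lintegral_const_mul' _ _ ENNReal.ofReal_ne_top, beta_lint hβ hβ2]
    congr 3
    rw [hΓ1def]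
    congr 1
    ring
  -- assemble
  have final : ENNReal.ofReal (Γ1 * Γ2)
      * ∫⁻ y : EuclideanSpace ℝ (Fin d), ENNReal.ofReal (‖x - y‖ ^ (α - d) * ‖y‖ ^ (-(2 * α)))
      = ENNReal.ofReal (Γ1 * Γ2) * ENNReal.ofReal (π ^ ((d:ℝ)/2) * Γ3^2 * Γ4 / (Γ1^2 * Γ2)
          * ‖x‖ ^ (-α)) := by
    rw [step1, step2,
      ← ENNReal.ofReal_mul (mul_nonneg hΓ3.le (Real.rpow_nonneg hc.le _)),
      ← ENNReal.ofReal_mul (Real.rpow_nonneg pi_pos.le _),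
      ← ENNReal.ofReal_mul (mul_nonneg hΓ1.le hΓ2.le)]
    congr 1
    have excc : c ^ (-(α/2)) = ‖x‖ ^ (-α) := by
      rw [hcdef, ← Real.rpow_natCast ‖x‖ 2, ← Real.rpow_mul (norm_nonneg _)]
      congr 1
      push_cast; ring
    rw [excc]
    field_simp
  exact (ENNReal.mul_right_inj
    (by positivity) ENNReal.ofReal_ne_top).1 final

end RieszAux4

/-- The constant `s(α,d)` of the singular stationary solution. -/
noncomputable def sConst (α : ℝ) (d : ℕ) : ℝ :=
  2 ^ α * Gamma ((d - α) / 2 + 1) * Gamma α / (Gamma ((d : ℝ) / 2 - α + 1) * Gamma (α / 2))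

/-- `u_C(x) = s(α,d)|x|^{-α}` is a stationary solution: applying the Riesz potential
`ℐ_α` (the inverse of `(−Δ)^{α/2}`) yields the stated convolution identity. -/
theorem singular_stationary_solution (d : ℕ) (hd : 2 ≤ d) (α : ℝ) (hα : α ∈ Set.Ioo (0:ℝ) 2)
    (h2α : 2 * α < d) (x : EuclideanSpace ℝ (Fin d)) (hx : x ≠ 0) :
    Integrable (fun y : EuclideanSpace ℝ (Fin d) => ‖x - y‖ ^ (α - d) * ‖y‖ ^ (-(2 * α))) ∧
    sConst α d * ((d - 2 * α) / (d - α)) *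
        (Gamma ((d - α) / 2) / (π ^ ((d : ℝ) / 2) * 2 ^ α * Gamma (α / 2))) *
        (∫ y : EuclideanSpace ℝ (Fin d), ‖x - y‖ ^ (α - d) * ‖y‖ ^ (-(2 * α)))
      = ‖x‖ ^ (-α) := by
  obtain ⟨hα1, hα2⟩ := hα
  have hd2 : (2:ℝ) ≤ d := by exact_mod_cast hd
  have hda : 0 < (d:ℝ) - α := by linarith
  have hd2a : 0 < (d:ℝ) - 2*α := by linarith
  have hx0 : (0:ℝ) < ‖x‖ := norm_pos_iff.2 hx
  have hL := RieszAux4.riesz_lint hd hα1 hα2 h2α x hx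
  set K := π ^ ((d:ℝ)/2) * Gamma (α/2)^2 * Gamma (((d:ℝ) - 2*α)/2)
      / (Gamma (((d:ℝ) - α)/2)^2 * Gamma α) * ‖x‖ ^ (-α) with hKdef
  have hΓ1 : 0 < Gamma (((d:ℝ) - α)/2) := Gamma_pos_of_pos (by linarith)
  have hΓ2 : 0 < Gamma α := Gamma_pos_of_pos hα1
  have hΓ3 : 0 < Gamma (α/2) := Gamma_pos_of_pos (by linarith)
  have hΓ4 : 0 < Gamma (((d:ℝ) - 2*α)/2) := Gamma_pos_of_pos (by linarith)
  have hKnn : 0 ≤ K := by positivity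
  have hmeas : AEStronglyMeasurable (fun y : EuclideanSpace ℝ (Fin d) =>
      ‖x - y‖ ^ (α - d) * ‖y‖ ^ (-(2*α))) volume := by
    apply Measurable.aestronglyMeasurable
    fun_prop
  have hnn : 0 ≤ᵐ[volume] fun y : EuclideanSpace ℝ (Fin d) =>
      ‖x - y‖ ^ (α - d) * ‖y‖ ^ (-(2*α)) :=
    Filter.Eventually.of_forall fun y =>
      mul_nonneg (Real.rpow_nonneg (norm_nonneg _) _) (Real.rpow_nonneg (norm_nonneg _) _)
  have hInt : Integrable (fun y : EuclideanSpace ℝ (Fin d) =>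
      ‖x - y‖ ^ (α - d) * ‖y‖ ^ (-(2*α))) := by
    refine ⟨hmeas, ?_⟩
    rw [hasFiniteIntegral_iff_ofReal hnn, hL]
    exact ENNReal.ofReal_lt_top
  refine ⟨hInt, ?_⟩
  have hval : (∫ y : EuclideanSpace ℝ (Fin d), ‖x - y‖ ^ (α - d) * ‖y‖ ^ (-(2*α))) = K := by
    rw [integral_eq_lintegral_of_nonneg_ae hnn hmeas, hL, ENNReal.toReal_ofReal hKnn]
  rw [hval]
  have hs1 : Gamma (((d:ℝ) - α)/2 + 1) = (((d:ℝ) - α)/2) * Gamma (((d:ℝ) - α)/2) :=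
    Real.Gamma_add_one (by positivity)
  have hs2 : Gamma ((d:ℝ)/2 - α + 1) = ((d:ℝ)/2 - α) * Gamma ((d:ℝ)/2 - α) :=
    Real.Gamma_add_one (by intro h; nlinarith)
  have hs3 : Gamma ((d:ℝ)/2 - α) = Gamma (((d:ℝ) - 2*α)/2) := by congr 1; ring
  have hπ : (0:ℝ) < π ^ ((d:ℝ)/2) := Real.rpow_pos_of_pos pi_pos _
  have h2p : (0:ℝ) < (2:ℝ) ^ α := Real.rpow_pos_of_pos two_pos α
  rw [sConst, hs1, hs2, hs3, hKdef]
  field_simp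
  exact div_self (mul_ne_zero (by linarith : (0:ℝ) < (d:ℝ) - α*2).ne'
    (Gamma_pos_of_pos (by linarith : (0:ℝ) < ((d:ℝ) - α*2)/2)).ne')
end

section
/- For each integer d ≥ 2 and each α ∈ (0,1], the inequality B(α/2, d/2 − α + 1) · B(α/2, α/2) ≥ B(α/2, 1 − α/2) · B(α/2, d/2) holds. -/
open Real MeasureTheory Set

/-- The Euler Beta function `B(μ,ν) = Γ(μ)Γ(ν)/Γ(μ+ν)`. -/
noncomputable def eulerBeta (μ ν : ℝ) : ℝ := Gamma μ * Gamma ν / Gamma (μ + ν)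


lemma eulerBeta_pos {μ ν : ℝ} (hμ : 0 < μ) (hν : 0 < ν) : 0 < eulerBeta μ ν := by
  unfold eulerBeta
  have h1 := Real.Gamma_pos_of_pos hμ
  have h2 := Real.Gamma_pos_of_pos hν
  have h3 := Real.Gamma_pos_of_pos (add_pos hμ hν)
  positivity

lemma eulerBeta_eq_intervalIntegral {μ ν : ℝ} (hμ : 0 < μ) (hν : 0 < ν) :
    eulerBeta μ ν = ∫ x in (0:ℝ)..1, x ^ (μ-1) * (1-x) ^ (ν-1) := by
  have h := Complex.Gamma_mul_Gamma_eq_betaIntegral (s := (μ:ℂ)) (t := (ν:ℂ))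
    (by simpa using hμ) (by simpa using hν)
  have hbeta : Complex.betaIntegral μ ν = ((∫ x in (0:ℝ)..1, x ^ (μ-1) * (1-x) ^ (ν-1) : ℝ) : ℂ) := by
    rw [Complex.betaIntegral]
    have : ∀ x ∈ uIcc (0:ℝ) 1,
        (x:ℂ) ^ ((μ:ℂ)-1) * (1-(x:ℂ)) ^ ((ν:ℂ)-1) = ((x ^ (μ-1) * (1-x) ^ (ν-1) : ℝ) : ℂ) := by
      intro x hx
      rw [uIcc_of_le zero_le_one] at hx
      push_cast
      rw [Complex.ofReal_cpow hx.1, Complex.ofReal_cpow (by linarith [hx.2])]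
      push_cast
      ring
    rw [intervalIntegral.integral_congr this]
    exact intervalIntegral.integral_ofReal
  rw [hbeta] at h
  simp only [Complex.Gamma_ofReal, ← Complex.ofReal_add, ← Complex.ofReal_mul,
    Complex.ofReal_inj] at h
  rw [eulerBeta, h]
  field_simp


lemma eulerBeta_eq_integral {μ ν : ℝ} (hμ : 0 < μ) (hν : 0 < ν) :
    eulerBeta μ ν = ∫ x in Ioo (0:ℝ) 1, x ^ (μ-1) * (1-x) ^ (ν-1) := by
  rw [eulerBeta_eq_intervalIntegral hμ hν, intervalIntegral.integral_of_le zero_le_one,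
    integral_Ioc_eq_integral_Ioo]

lemma betaIntegrand_integrableOn {μ ν : ℝ} (hμ : 0 < μ) (hν : 0 < ν) :
    IntegrableOn (fun x => x ^ (μ-1) * (1-x) ^ (ν-1)) (Ioo (0:ℝ) 1) := by
  have h := Complex.betaIntegral_convergent (u := (μ:ℂ)) (v := (ν:ℂ))
    (by simpa using hμ) (by simpa using hν)
  rw [intervalIntegrable_iff_integrableOn_Ioo_of_le zero_le_one] at h
  have h2 : IntegrableOn (fun x : ℝ => ((x ^ (μ-1) * (1-x) ^ (ν-1) : ℝ) : ℂ)) (Ioo (0:ℝ) 1) := by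
    refine h.congr_fun (fun x hx => ?_) measurableSet_Ioo
    push_cast
    rw [Complex.ofReal_cpow hx.1.le, Complex.ofReal_cpow (by linarith [hx.2])]
    push_cast
    ring
  have h3 := h2.re
  refine h3.congr (Filter.EventuallyEq.of_eq ?_)
  funext x
  simp

lemma eulerBeta_holder {μ s t a b : ℝ} (hμ : 0 < μ) (hs : 0 < s) (ht : 0 < t)
    (ha : 0 < a) (hb : 0 < b) (hab : a + b = 1) :
    eulerBeta μ (a * s + b * t) ≤ eulerBeta μ s ^ a * eulerBeta μ t ^ b := by
  let f : ℝ → ℝ → ℝ → ℝ := fun c u x => x ^ (c * (μ - 1)) * (1 - x) ^ (c * (u - 1))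
  have e : Real.HolderConjugate (1 / a) (1 / b) := Real.holderConjugate_one_div ha hb hab
  have hst : 0 < a * s + b * t := by positivity
  have posf : ∀ c u x : ℝ, x ∈ Ioo (0:ℝ) 1 → 0 ≤ f c u x := fun c u x hx =>
    mul_nonneg (rpow_nonneg hx.1.le _) (rpow_nonneg (by linarith [hx.2]) _)
  have posf' : ∀ c u : ℝ, 0 ≤ᵐ[volume.restrict (Ioo (0:ℝ) 1)] f c u := fun c u =>
    (ae_restrict_iff' measurableSet_Ioo).mpr (ae_of_all _ (posf c u))
  have fpow : ∀ {c x : ℝ}, 0 < c → ∀ (u : ℝ), x ∈ Ioo (0:ℝ) 1 →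
      x ^ (μ - 1) * (1 - x) ^ (u - 1) = f c u x ^ (1 / c) := by
    intro c x hc u hx
    dsimp only [f]
    rw [mul_rpow (rpow_nonneg hx.1.le _) (rpow_nonneg (by linarith [hx.2]) _),
      ← rpow_mul hx.1.le, ← rpow_mul (by linarith [hx.2] : (0:ℝ) ≤ 1 - x)]
    congr 2 <;> field_simp [hc.ne']
  have meas : ∀ c u : ℝ, AEStronglyMeasurable (f c u) (volume.restrict (Ioo (0:ℝ) 1)) := by
    intro c u
    refine ContinuousOn.aestronglyMeasurable (ContinuousOn.mul ?_ ?_) measurableSet_Ioo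
    · exact continuousOn_of_forall_continuousAt fun x hx =>
        continuousAt_rpow_const _ _ (Or.inl (ne_of_gt hx.1))
    · exact continuousOn_of_forall_continuousAt fun x hx =>
        ContinuousAt.rpow_const (by fun_prop) (Or.inl (by simp only [mem_Ioo] at hx; intro h; nlinarith [hx.2]))
  have f_mem_Lp : ∀ {c u : ℝ}, 0 < c → 0 < u →
      MemLp (f c u) (ENNReal.ofReal (1 / c)) (volume.restrict (Ioo (0:ℝ) 1)) := by
    intro c u hc hu
    have A : ENNReal.ofReal (1 / c) ≠ 0 := by
      rwa [Ne, ENNReal.ofReal_eq_zero, not_le, one_div_pos]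
    have B : ENNReal.ofReal (1 / c) ≠ ⊤ := ENNReal.ofReal_ne_top
    rw [← memLp_norm_rpow_iff _ A B, ENNReal.toReal_ofReal (one_div_nonneg.mpr hc.le),
      ENNReal.div_self A B, memLp_one_iff_integrable]
    · apply Integrable.congr (betaIntegrand_integrableOn hμ hu)
      refine Filter.eventuallyEq_of_mem (self_mem_ae_restrict measurableSet_Ioo) fun x hx => ?_
      rw [fpow hc u hx]
      congr 1
      exact (norm_of_nonneg (posf _ _ x hx)).symm
    · exact meas c u
  rw [eulerBeta_eq_integral hμ hst, eulerBeta_eq_integral hμ hs, eulerBeta_eq_integral hμ ht]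
  convert MeasureTheory.integral_mul_le_Lp_mul_Lq_of_nonneg e (posf' a s) (posf' b t)
      (f_mem_Lp ha hs) (f_mem_Lp hb ht) using 1
  · refine setIntegral_congr_fun measurableSet_Ioo fun x hx => ?_
    dsimp only [f]
    have hx1 : (0:ℝ) < 1 - x := by linarith [hx.2]
    have B : (1-x) ^ (a*s+b*t-1) = (1-x) ^ (a*(s-1)) * (1-x) ^ (b*(t-1)) := by
      rw [← rpow_add hx1]; congr 1; nlinarith
    have A2 : x ^ (μ-1) = x ^ (a*(μ-1)) * x ^ (b*(μ-1)) := by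
      rw [← rpow_add hx.1]; congr 1; nlinarith
    rw [A2, B]; ring
  · rw [one_div_one_div, one_div_one_div]
    congr 2 <;> exact setIntegral_congr_fun measurableSet_Ioo fun x hx => fpow (by assumption) _ hx

lemma eulerBeta_pair {μ x₁ x₂ u v : ℝ} (hμ : 0 < μ) (hx₁ : 0 < x₁)
    (h1 : x₁ ≤ u) (h2 : u ≤ v) (h3 : v ≤ x₂) (hsum : x₁ + x₂ = u + v) :
    eulerBeta μ u * eulerBeta μ v ≤ eulerBeta μ x₁ * eulerBeta μ x₂ := by
  rcases eq_or_lt_of_le h1 with h | h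
  · have hv : v = x₂ := by linarith
    rw [← h, hv]
  · have hu2 : u < x₂ := by linarith
    have hd : 0 < x₂ - x₁ := by linarith
    have ha : 0 < (x₂ - u) / (x₂ - x₁) := div_pos (by linarith) hd
    have hb : 0 < (u - x₁) / (x₂ - x₁) := div_pos (by linarith) hd
    have hab : (x₂ - u) / (x₂ - x₁) + (u - x₁) / (x₂ - x₁) = 1 := by field_simp; ring
    have hux : u = ((x₂ - u) / (x₂ - x₁)) * x₁ + ((u - x₁) / (x₂ - x₁)) * x₂ := by
      field_simp; ring
    have hvx : v = ((u - x₁) / (x₂ - x₁)) * x₁ + ((x₂ - u) / (x₂ - x₁)) * x₂ := by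
      have hv' : v = x₁ + x₂ - u := by linarith
      rw [hv']; field_simp; ring
    set a : ℝ := (x₂ - u) / (x₂ - x₁)
    set b : ℝ := (u - x₁) / (x₂ - x₁)
    have hx₂ : 0 < x₂ := by linarith
    have hcu : eulerBeta μ u ≤ eulerBeta μ x₁ ^ a * eulerBeta μ x₂ ^ b := by
      rw [hux]; exact eulerBeta_holder hμ hx₁ hx₂ ha hb hab
    have hcv : eulerBeta μ v ≤ eulerBeta μ x₁ ^ b * eulerBeta μ x₂ ^ a := by
      rw [hvx]; exact eulerBeta_holder hμ hx₁ hx₂ hb ha (by linarith)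
    have p1 := eulerBeta_pos hμ hx₁
    have p2 := eulerBeta_pos hμ hx₂
    calc eulerBeta μ u * eulerBeta μ v
        ≤ (eulerBeta μ x₁ ^ a * eulerBeta μ x₂ ^ b) * (eulerBeta μ x₁ ^ b * eulerBeta μ x₂ ^ a) := by
          apply mul_le_mul hcu hcv (le_of_lt (eulerBeta_pos hμ (by linarith))) (by positivity)
      _ = eulerBeta μ x₁ * eulerBeta μ x₂ := by
          rw [mul_mul_mul_comm, ← rpow_add p1, ← rpow_add p2, hab, add_comm b a, hab,
            rpow_one, rpow_one]

/-- For `d ≥ 2` and `α ∈ (0,1]`,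
`B(α/2, d/2 − α + 1) B(α/2, α/2) ≥ B(α/2, 1 − α/2) B(α/2, d/2)`. -/
theorem beta_inequality (d : ℕ) (hd : 2 ≤ d) (α : ℝ) (hα : α ∈ Set.Ioc (0:ℝ) 1) :
    eulerBeta (α / 2) ((d : ℝ) / 2 - α + 1) * eulerBeta (α / 2) (α / 2) ≥
      eulerBeta (α / 2) (1 - α / 2) * eulerBeta (α / 2) ((d : ℝ) / 2) := by
  obtain ⟨hα0, hα1⟩ := hα
  set p : ℝ := α / 2 with hp_def
  have hp : 0 < p := by positivity
  have hp2 : p ≤ 1/2 := by simp only [hp_def]; linarith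
  have hD : (1:ℝ) ≤ (d:ℝ)/2 := by
    have : (2:ℝ) ≤ (d:ℝ) := by exact_mod_cast hd
    linarith
  have key := eulerBeta_pair (μ := p) (x₁ := p) (x₂ := (d:ℝ)/2 - α + 1)
    (u := 1 - p) (v := (d:ℝ)/2) hp hp
    (by linarith) (by linarith) (by linarith) (by linarith)
  rw [ge_iff_le, mul_comm (eulerBeta p ((d:ℝ)/2 - α + 1))]
  exact key
end

section
/- For each integer d ≥ 2 there exists a constant c(d) ∈ (0,1), depending only on d, such that for every κ ∈ [1,d) and every nonnegative, radially symmetric, locally integrable function v on ℝ^d one has c(d) · sup_{x₀ ∈ ℝ^d, ρ > 0} ρ^{κ−d} ∫_{{|x−x₀|<ρ}} v(x) dx ≤ sup_{R>0} R^{κ−d} ∫_{{|x|<R}} v(x) dx ≤ sup_{x₀ ∈ ℝ^d, ρ > 0} ρ^{κ−d} ∫_{{|x−x₀|<ρ}} v(x) dx. (In other words, for radial nonnegative functions the homogeneous Morrey norm in M^{d/κ}(ℝ^d) is equivalent to the supremum over balls centered at the origin.) -/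
open MeasureTheory Metric
open scoped ENNReal

section
variable {d : ℕ}

local notation "E" => EuclideanSpace ℝ (Fin d)

lemma radial_int_ball (v : E → ℝ)
    (V : ℝ → ℝ) (hV : ∀ x, v x = V ‖x‖) {x y : E}
    (hxy : ‖x‖ = ‖y‖) (ρ : ℝ) :
    ∫ z in ball x ρ, v z = ∫ z in ball y ρ, v z := by
  rcases eq_or_ne x y with rfl | hne
  · rfl
  set f := Submodule.reflection (ℝ ∙ (x - y))ᗮ with hf
  have hfx : f x = y := Submodule.reflection_sub hxy
  have hmp : MeasurePreserving f volume volume := f.measurePreserving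
  have hemb : MeasurableEmbedding f := f.toHomeomorph.toMeasurableEquiv.measurableEmbedding
  have hpre : f ⁻¹' ball y ρ = ball x ρ := by
    ext z
    simp only [Set.mem_preimage, mem_ball, dist_eq_norm]
    rw [← hfx, ← map_sub f, f.norm_map]
  have hcomp : ∀ z, v (f z) = v z := fun z => by rw [hV, hV, f.norm_map]
  calc ∫ z in ball x ρ, v z = ∫ z in f ⁻¹' ball y ρ, v (f z) := by
        rw [hpre]; simp only [hcomp]
    _ = ∫ z in ball y ρ, v z := hmp.setIntegral_preimage_emb hemb _ _

lemma far_alg (d : ℕ) (hd : 2 ≤ d) (κ ρ r I W N : ℝ)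
    (hρ : 0 < ρ) (hr : 2*ρ ≤ r) (hκ1 : 1 ≤ κ)
    (hI : 0 ≤ I) (hW : 0 ≤ W)
    (hNI : N * I ≤ W)
    (hN : (r+ρ)^d ≤ (r-ρ)^d + N*(3*ρ)^d) :
    ρ^(κ-(d:ℝ)) * I ≤ 12^d * ((2*r)^(κ-(d:ℝ)) * W) := by
  have hrpos : 0 < r := lt_of_lt_of_le (by linarith) hr
  have hbpos : 0 < r - ρ := by linarith
  have hd1 : d - 1 + 1 = d := by omega
  have hbig : 0 < 2*ρ*(r-ρ)^(d-1) := by positivity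
  -- key1 : 2ρ(r-ρ)^{d-1} ≤ (r+ρ)^d - (r-ρ)^d
  have key1 : 2*ρ*(r-ρ)^(d-1) ≤ (r+ρ)^d - (r-ρ)^d := by
    have h1 : (r-ρ)^(d-1) ≤ (r+ρ)^(d-1) := pow_le_pow_left₀ hbpos.le (by linarith) _
    have e1 : (r+ρ)^d = (r+ρ) * (r+ρ)^(d-1) := by
      conv_lhs => rw [← hd1]; rw [pow_succ]
      ring
    have e2 : (r-ρ)^d = (r-ρ) * (r-ρ)^(d-1) := by
      conv_lhs => rw [← hd1]; rw [pow_succ]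
      ring
    have h2 : (r+ρ) * (r-ρ)^(d-1) ≤ (r+ρ) * (r+ρ)^(d-1) :=
      mul_le_mul_of_nonneg_left h1 (by linarith)
    rw [e1, e2]; nlinarith [pow_nonneg hbpos.le (d-1)]
  have hLnn : 0 ≤ ρ^(κ-(d:ℝ)) * I := mul_nonneg (Real.rpow_nonneg hρ.le _) hI
  -- step h1 : (ρ^(κ-d) * I) * (2ρ(r-ρ)^{d-1}) ≤ ρ^(κ-d) * (3ρ)^d * W
  have step1 : (ρ^(κ-(d:ℝ)) * I) * (2*ρ*(r-ρ)^(d-1)) ≤ ρ^(κ-(d:ℝ)) * (3*ρ)^d * W := by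
    have a1 : (ρ^(κ-(d:ℝ)) * I) * (2*ρ*(r-ρ)^(d-1)) ≤ (ρ^(κ-(d:ℝ)) * I) * (N*(3*ρ)^d) :=
      mul_le_mul_of_nonneg_left (by linarith) hLnn
    have a2 : (ρ^(κ-(d:ℝ)) * I) * (N*(3*ρ)^d) = ρ^(κ-(d:ℝ)) * (3*ρ)^d * (N * I) := by ring
    have a3 : ρ^(κ-(d:ℝ)) * (3*ρ)^d * (N * I) ≤ ρ^(κ-(d:ℝ)) * (3*ρ)^d * W :=
      mul_le_mul_of_nonneg_left hNI (by positivity)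
    linarith
  -- star : ρ^(κ-d) * (3ρ)^d ≤ 12^d * (2r)^(κ-d) * (2ρ(r-ρ)^{d-1})
  have star : ρ^(κ-(d:ℝ)) * (3*ρ)^d ≤ (12^d * (2*r)^(κ-(d:ℝ))) * (2*ρ*(r-ρ)^(d-1)) := by
    have eq1 : (3*ρ)^d = 3^d * ρ^d := mul_pow 3 ρ d
    have eq2 : ρ^(κ-(d:ℝ)) * ρ^d = ρ^(κ-1) * ρ := by
      rw [← Real.rpow_natCast ρ d, ← Real.rpow_add hρ,
        show κ-(d:ℝ)+(d:ℝ) = (κ-1)+1 by ring, Real.rpow_add hρ, Real.rpow_one]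
    have eq3 : (2*r)^(κ-(d:ℝ)) = 2^(κ-(d:ℝ)) * r^(κ-(d:ℝ)) :=
      Real.mul_rpow (by norm_num) hrpos.le
    have eq4 : r^(κ-(d:ℝ)) * r^(d-1) = r^(κ-1) := by
      rw [← Real.rpow_natCast r (d-1), ← Real.rpow_add hrpos]
      congr 1
      have : ((d-1:ℕ):ℝ) = (d:ℝ) - 1 := by
        rw [Nat.cast_sub (by omega)]; norm_num
      rw [this]; ring
    have ineq5 : (r/2)^(d-1) ≤ (r-ρ)^(d-1) := pow_le_pow_left₀ (by positivity) (by linarith) _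
    have ineq6 : ρ^(κ-1) ≤ r^(κ-1) :=
      Real.rpow_le_rpow hρ.le (by linarith) (by linarith)
    have ineq7 : (2:ℝ)^((1:ℝ)-(d:ℝ)) ≤ 2^(κ-(d:ℝ)) :=
      Real.rpow_le_rpow_of_exponent_le (by norm_num) (by linarith)
    have eq8 : (2:ℝ)^((1:ℝ)-(d:ℝ)) = 2 / 2^d := by
      rw [Real.rpow_sub (by norm_num), Real.rpow_one, Real.rpow_natCast]
    have h2dpos : (0:ℝ) < 2^d := by positivity
    have hrk1 : (0:ℝ) < r^(κ-1) := Real.rpow_pos_of_pos hrpos _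
    have hrkd : (0:ℝ) < r^(κ-(d:ℝ)) := Real.rpow_pos_of_pos hrpos _
    -- LHS = 3^d * (ρ^{κ-1} * ρ) ≤ 3^d * (r^{κ-1} * ρ)
    have L1 : ρ^(κ-(d:ℝ)) * (3*ρ)^d = 3^d * (ρ^(κ-1) * ρ) := by
      rw [eq1]; rw [show ρ^(κ-(d:ℝ)) * (3^d * ρ^d) = 3^d * (ρ^(κ-(d:ℝ)) * ρ^d) by ring, eq2]
    have L2 : (3:ℝ)^d * (ρ^(κ-1) * ρ) ≤ 3^d * (r^(κ-1) * ρ) := by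
      have : ρ^(κ-1) * ρ ≤ r^(κ-1) * ρ := mul_le_mul_of_nonneg_right ineq6 hρ.le
      exact mul_le_mul_of_nonneg_left this (by positivity)
    -- RHS ≥ 12^d * 2^{1-d} * r^{κ-d} * 2ρ * (r/2)^{d-1} = 8 * 3^d * r^{κ-1} * ρ / ... compute
    have R1 : (12:ℝ)^d * (2^((1:ℝ)-(d:ℝ)) * r^(κ-(d:ℝ))) * (2*ρ*(r/2)^(d-1))
        ≤ (12^d * (2*r)^(κ-(d:ℝ))) * (2*ρ*(r-ρ)^(d-1)) := by
      rw [eq3]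
      have f1 : (0:ℝ) ≤ 2*ρ*(r/2)^(d-1) := by positivity
      have m1 : (12:ℝ)^d * (2^((1:ℝ)-(d:ℝ)) * r^(κ-(d:ℝ))) ≤
          12^d * (2^(κ-(d:ℝ)) * r^(κ-(d:ℝ))) := by
        have : (2:ℝ)^((1:ℝ)-(d:ℝ)) * r^(κ-(d:ℝ)) ≤ 2^(κ-(d:ℝ)) * r^(κ-(d:ℝ)) :=
          mul_le_mul_of_nonneg_right ineq7 hrkd.le
        exact mul_le_mul_of_nonneg_left this (by positivity)
      have m2 : 2*ρ*(r/2)^(d-1) ≤ 2*ρ*(r-ρ)^(d-1) :=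
        mul_le_mul_of_nonneg_left ineq5 (by linarith)
      calc (12:ℝ)^d * (2^((1:ℝ)-(d:ℝ)) * r^(κ-(d:ℝ))) * (2*ρ*(r/2)^(d-1))
          ≤ (12^d * (2^(κ-(d:ℝ)) * r^(κ-(d:ℝ)))) * (2*ρ*(r/2)^(d-1)) :=
            mul_le_mul_of_nonneg_right m1 f1
        _ ≤ (12^d * (2^(κ-(d:ℝ)) * r^(κ-(d:ℝ)))) * (2*ρ*(r-ρ)^(d-1)) :=
            mul_le_mul_of_nonneg_left m2 (by positivity)
    -- middle : 3^d * (r^{κ-1} * ρ) ≤ 12^d * (2^{1-d} * r^{κ-d}) * (2ρ(r/2)^{d-1})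
    have mid : (3:ℝ)^d * (r^(κ-1) * ρ) ≤
        12^d * (2^((1:ℝ)-(d:ℝ)) * r^(κ-(d:ℝ))) * (2*ρ*(r/2)^(d-1)) := by
      have e9 : (r/2)^(d-1) = r^(d-1)/2^(d-1) := div_pow r 2 (d-1)
      have e10 : r^(κ-(d:ℝ)) * (r:ℝ)^(d-1) = r^(κ-1) := eq4
      have e11 : (12:ℝ)^d = 3^d * (2^d * 2^d) := by
        rw [← mul_pow, ← mul_pow]; norm_num
      have e12 : (2:ℝ)^d = 2 * 2^(d-1) := by
        conv_lhs => rw [← hd1, pow_succ]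
        ring
      rw [eq8, e9, e11, e12]
      have h2d1 : (0:ℝ) < 2^(d-1) := by positivity
      rw [div_eq_mul_inv, div_eq_mul_inv]
      have lhs_eq : (3:ℝ)^d * (2*2^(d-1)*(2*2^(d-1))) * (2*(2*2^(d-1))⁻¹ * r^(κ-(d:ℝ))) *
          (2*ρ*(r^(d-1)*(2^(d-1))⁻¹)) = 8 * (3^d * (r^(κ-(d:ℝ)) * r^(d-1) * ρ)) := by
        field_simp
        ring
      rw [lhs_eq, e10]
      nlinarith [mul_nonneg (mul_nonneg (pow_nonneg (by norm_num : (0:ℝ) ≤ 3) d) hrk1.le) hρ.le]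
    rw [L1]
    exact le_trans (le_trans L2 mid) R1
  -- combine: multiply star by W and use step1
  have step2 : ρ^(κ-(d:ℝ)) * (3*ρ)^d * W ≤ ((12^d * ((2*r)^(κ-(d:ℝ)) * W))) * (2*ρ*(r-ρ)^(d-1)) := by
    have := mul_le_mul_of_nonneg_right star hW
    calc ρ^(κ-(d:ℝ)) * (3*ρ)^d * W ≤ (12^d * (2*r)^(κ-(d:ℝ))) * (2*ρ*(r-ρ)^(d-1)) * W := this
      _ = (12^d * ((2*r)^(κ-(d:ℝ)) * W)) * (2*ρ*(r-ρ)^(d-1)) := by ring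
  have := le_trans step1 step2
  exact le_of_mul_le_mul_right this hbig

lemma key (hd : 2 ≤ d) (κ : ℝ) (hκ1 : 1 ≤ κ) (hκd : κ ≤ d)
    (v : E → ℝ) (hv : ∀ x, 0 ≤ v x)
    (V : ℝ → ℝ) (hV : ∀ x, v x = V ‖x‖)
    (hloc : LocallyIntegrable v volume)
    (x₀ : E) {ρ : ℝ} (hρ : 0 < ρ) :
    ∃ R : ℝ, 0 < R ∧
      ρ ^ (κ - (d:ℝ)) * ∫ x in ball x₀ ρ, v x ≤
        12 ^ d * (R ^ (κ - (d:ℝ)) * ∫ x in ball (0 : E) R, v x) := by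
  haveI : Nontrivial (EuclideanSpace ℝ (Fin d)) :=
    Module.nontrivial_of_finrank_pos (R := ℝ)
      (by rw [finrank_euclideanSpace_fin]; omega)
  have hrankd : Module.finrank ℝ (EuclideanSpace ℝ (Fin d)) = d := finrank_euclideanSpace_fin
  have hInt : ∀ R : ℝ, IntegrableOn v (ball (0:E) R) volume :=
    fun R => (hloc.integrableOn_isCompact (isCompact_closedBall 0 R)).mono_set
      ball_subset_closedBall
  have hvnn : ∀ s : Set E, 0 ≤ᵐ[volume.restrict s] v :=
    fun s => Filter.Eventually.of_forall hv
  have hInn : 0 ≤ ∫ x in ball x₀ ρ, v x :=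
    setIntegral_nonneg measurableSet_ball fun x _ => hv x
  set r : ℝ := ‖x₀‖ with hrdef
  rcases le_or_gt r (2*ρ) with hnear | hfar
  · -- near case : use R = 3ρ
    refine ⟨3*ρ, by linarith, ?_⟩
    have hsub : ball x₀ ρ ⊆ ball (0:E) (3*ρ) := fun z hz => by
      rw [mem_ball, dist_zero_right]
      calc ‖z‖ ≤ ‖z - x₀‖ + ‖x₀‖ := by simpa using norm_add_le (z - x₀) x₀
        _ < ρ + 2*ρ := by
            have := mem_ball_iff_norm.1 hz
            rw [← hrdef]; linarith
        _ = 3*ρ := by ring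
    have hIW : ∫ x in ball x₀ ρ, v x ≤ ∫ x in ball (0:E) (3*ρ), v x :=
      setIntegral_mono_set (hInt _) (hvnn _) (HasSubset.Subset.eventuallyLE hsub)
    have hWnn : 0 ≤ ∫ x in ball (0:E) (3*ρ), v x :=
      setIntegral_nonneg measurableSet_ball fun x _ => hv x
    -- algebra
    have e3 : ((3:ℝ)*ρ) ^ (κ-(d:ℝ)) = 3^(κ-(d:ℝ)) * ρ^(κ-(d:ℝ)) :=
      Real.mul_rpow (by norm_num) hρ.le
    have h1le : (1:ℝ) ≤ 12^d * 3^(κ-(d:ℝ)) := by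
      have i1 : (3:ℝ)^(-(d:ℝ)) ≤ 3^(κ-(d:ℝ)) :=
        Real.rpow_le_rpow_of_exponent_le (by norm_num) (by linarith)
      have e4 : (3:ℝ)^(-(d:ℝ)) = ((3:ℝ)^d)⁻¹ := by
        rw [Real.rpow_neg (by norm_num), Real.rpow_natCast]
      have h3d : (0:ℝ) < 3^d := by positivity
      have : (12:ℝ)^d * ((3:ℝ)^d)⁻¹ = 4^d := by
        rw [show (12:ℝ) = 4*3 by norm_num, mul_pow]
        field_simp
      calc (1:ℝ) ≤ 4^d := one_le_pow₀ (by norm_num)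
        _ = 12^d * ((3:ℝ)^d)⁻¹ := this.symm
        _ = 12^d * 3^(-(d:ℝ)) := by rw [e4]
        _ ≤ 12^d * 3^(κ-(d:ℝ)) := mul_le_mul_of_nonneg_left i1 (by positivity)
    calc ρ^(κ-(d:ℝ)) * ∫ x in ball x₀ ρ, v x
        ≤ ρ^(κ-(d:ℝ)) * ∫ x in ball (0:E) (3*ρ), v x :=
          mul_le_mul_of_nonneg_left hIW (Real.rpow_nonneg hρ.le _)
      _ ≤ (12^d * 3^(κ-(d:ℝ))) * (ρ^(κ-(d:ℝ)) * ∫ x in ball (0:E) (3*ρ), v x) :=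
          le_mul_of_one_le_left (mul_nonneg (Real.rpow_nonneg hρ.le _) hWnn) h1le
      _ = 12^d * (((3:ℝ)*ρ)^(κ-(d:ℝ)) * ∫ x in ball (0:E) (3*ρ), v x) := by
          rw [e3]; ring
  · -- far case : use R = 2r
    have hrpos : 0 < r := by linarith
    refine ⟨2*r, by linarith, ?_⟩
    set W := ∫ x in ball (0:E) (2*r), v x with hWdef
    have hWnn : 0 ≤ W := setIntegral_nonneg measurableSet_ball fun x _ => hv x
    set v1 := volume (ball (0:E) 1) with hv1def
    have hv1pos : v1 ≠ 0 := (measure_ball_pos volume 0 one_pos).ne'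
    have hv1top : v1 ≠ ⊤ := measure_ball_lt_top.ne
    set Sep : Set (Set (EuclideanSpace ℝ (Fin d))) :=
      {s | s ⊆ sphere (0:E) r ∧ s.Pairwise fun a b => 2*ρ ≤ dist a b} with hSepdef
    obtain ⟨m, hmax⟩ : ∃ m, Maximal (· ∈ Sep) m := by
      apply zorn_subset
      intro c hcS hchain
      refine ⟨⋃₀ c, ⟨Set.sUnion_subset fun s hs => (hcS hs).1, ?_⟩,
        fun s hs => Set.subset_sUnion_of_mem hs⟩
      intro a ha b hb hab
      obtain ⟨s, hs, has⟩ := ha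
      obtain ⟨u, hu, hbu⟩ := hb
      rcases hchain.total hs hu with hsu | hus
      · exact (hcS hu).2 (hsu has) hbu hab
      · exact (hcS hs).2 has (hus hbu) hab
    have hmsph : m ⊆ sphere (0:E) r := hmax.1.1
    have hmpair : m.Pairwise fun a b => 2*ρ ≤ dist a b := hmax.1.2
    have hmnorm : ∀ a ∈ m, ‖a‖ = r := fun a ha => mem_sphere_zero_iff_norm.1 (hmsph ha)
    have hsub2r : ∀ a ∈ m, ball a ρ ⊆ ball (0:E) (2*r) := by
      intro a ha z hz
      rw [mem_ball, dist_zero_right]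
      have h1 : ‖z - a‖ < ρ := mem_ball_iff_norm.1 hz
      have h2 : ‖z‖ ≤ ‖z - a‖ + ‖a‖ := by simpa using norm_add_le (z - a) a
      rw [hmnorm a ha] at h2
      linarith
    have hcard : ∀ u : Finset (EuclideanSpace ℝ (Fin d)), ↑u ⊆ m →
        (u.card : ℝ≥0∞) * (ENNReal.ofReal (ρ^d) * v1) ≤ volume (ball (0:E) (2*r)) := by
      intro u hum
      have hdisj : (↑u : Set (EuclideanSpace ℝ (Fin d))).PairwiseDisjoint
          fun a => ball a ρ := by
        intro a ha b hb hab
        exact ball_disjoint_ball (by have := hmpair (hum ha) (hum hb) hab; linarith)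
      have heq := measure_biUnion_finset (μ := volume) hdisj (fun b _ => measurableSet_ball)
      have hmono : volume (⋃ a ∈ u, ball a ρ) ≤ volume (ball (0:E) (2*r)) :=
        measure_mono (Set.iUnion₂_subset fun a ha => hsub2r a (hum ha))
      rw [heq] at hmono
      have heach : ∀ a ∈ u, volume (ball a ρ) = ENNReal.ofReal (ρ^d) * v1 := by
        intro a _
        rw [Measure.addHaar_ball volume a hρ.le, hrankd]
      rwa [Finset.sum_congr rfl heach, Finset.sum_const, nsmul_eq_mul] at hmono
    have hfin : m.Finite := by
      by_contra hinf
      have hinf' : m.Infinite := hinf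
      have hVfin : volume (ball (0:E) (2*r)) ≠ ⊤ := measure_ball_lt_top.ne
      have hεne : ENNReal.ofReal (ρ^d) * v1 ≠ 0 := by
        apply mul_ne_zero _ hv1pos
        rw [Ne, ENNReal.ofReal_eq_zero, not_le]
        positivity
      have hεtop : ENNReal.ofReal (ρ^d) * v1 ≠ ⊤ :=
        ENNReal.mul_ne_top ENNReal.ofReal_ne_top hv1top
      obtain ⟨n, hn⟩ := ENNReal.exists_nat_gt (ENNReal.div_lt_top hVfin hεne).ne
      obtain ⟨u, hum, huc⟩ := hinf'.exists_subset_card_eq n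
      have h1 := hcard u hum
      rw [huc] at h1
      have h2 : volume (ball (0:E) (2*r)) < (n:ℝ≥0∞) * (ENNReal.ofReal (ρ^d) * v1) :=
        (ENNReal.div_lt_iff (Or.inl hεne) (Or.inl hεtop)).1 hn
      exact absurd h1 (not_le.2 h2)
    set t := hfin.toFinset with htdef
    have htm : (↑t : Set (EuclideanSpace ℝ (Fin d))) ⊆ m := hfin.coe_toFinset.le
    set N := t.card with hNdef
    have hcover : ball (0:E) (r+ρ) ⊆
        closedBall (0:E) (r-ρ) ∪ ⋃ a ∈ t, ball a (3*ρ) := by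
      intro x hx
      rw [mem_ball, dist_zero_right] at hx
      by_cases hxs : ‖x‖ ≤ r - ρ
      · left; rwa [mem_closedBall, dist_zero_right]
      push_neg at hxs
      right
      have hxpos : 0 < ‖x‖ := by
        have : 0 < r - ρ := by linarith
        linarith
      set p : EuclideanSpace ℝ (Fin d) := (r/‖x‖) • x with hpdef
      have hpnorm : ‖p‖ = r := by
        rw [hpdef, norm_smul, Real.norm_eq_abs, abs_of_pos (by positivity),
          div_mul_cancel₀ _ hxpos.ne']
      have hpx : dist x p = |‖x‖ - r| := by
        rw [dist_eq_norm, hpdef]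
        have e : x - (r/‖x‖) • x = (1 - r/‖x‖) • x := by
          rw [sub_smul, one_smul]
        rw [e, norm_smul, Real.norm_eq_abs]
        have e2 : 1 - r/‖x‖ = (‖x‖ - r)/‖x‖ := by field_simp
        rw [e2, abs_div, abs_of_pos hxpos, div_mul_cancel₀ _ hxpos.ne']
      have hdxp : dist x p < ρ := by
        rw [hpx, abs_lt]; constructor <;> linarith
      have hexists : ∃ a ∈ m, dist p a < 2*ρ := by
        by_contra hno
        push_neg at hno
        have hins : insert p m ∈ Sep := by
          constructor
          · exact Set.insert_subset (mem_sphere_zero_iff_norm.2 hpnorm) hmsph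
          · haveI : Std.Symm (fun a b : E => 2*ρ ≤ dist a b) :=
              ⟨fun a b (h : 2*ρ ≤ dist a b) => by rwa [dist_comm] at h⟩
            rw [Set.pairwise_insert_of_symm]
            exact ⟨hmpair, fun b hb _ => hno b hb⟩
        have hsub' : insert p m ⊆ m := hmax.2 hins (Set.subset_insert p m)
        have hpm : p ∈ m := hsub' (Set.mem_insert p m)
        have := hno p hpm
        rw [dist_self] at this
        linarith
      obtain ⟨a, ham, hpa⟩ := hexists
      refine Set.mem_biUnion (hfin.mem_toFinset.2 ham) ?_
      rw [mem_ball]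
      calc dist x a ≤ dist x p + dist p a := dist_triangle x p a
        _ < ρ + 2*ρ := by linarith
        _ = 3*ρ := by ring
    have hvol : ENNReal.ofReal ((r+ρ)^d) * v1 ≤
        (ENNReal.ofReal ((r-ρ)^d) + (N:ℝ≥0∞) * ENNReal.ofReal ((3*ρ)^d)) * v1 := by
      have h1 : volume (ball (0:E) (r+ρ)) ≤ volume (closedBall (0:E) (r-ρ)) +
          ∑ a ∈ t, volume (ball a (3*ρ)) := by
        refine le_trans (measure_mono hcover) ?_
        refine le_trans (measure_union_le _ _) ?_
        gcongr
        exact measure_biUnion_finset_le t _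
      rw [Measure.addHaar_ball volume _ (by linarith : (0:ℝ) ≤ r+ρ), hrankd,
        Measure.addHaar_closedBall volume _ (by linarith : (0:ℝ) ≤ r-ρ), hrankd] at h1
      have heach : ∀ a ∈ t, volume (ball a (3*ρ)) = ENNReal.ofReal ((3*ρ)^d) * v1 := by
        intro a _
        rw [Measure.addHaar_ball volume a (by linarith : (0:ℝ) ≤ 3*ρ), hrankd]
      rw [Finset.sum_congr rfl heach, Finset.sum_const, nsmul_eq_mul] at h1
      calc ENNReal.ofReal ((r+ρ)^d) * v1 ≤ _ := h1
        _ = (ENNReal.ofReal ((r-ρ)^d) + (N:ℝ≥0∞) * ENNReal.ofReal ((3*ρ)^d)) * v1 := by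
          ring
    have hvol2 : ((r+ρ)^d : ℝ) ≤ (r-ρ)^d + (N:ℝ) * (3*ρ)^d := by
      have h2 := (ENNReal.mul_le_mul_iff_left hv1pos hv1top).1 hvol
      rw [← ENNReal.ofReal_natCast N, ← ENNReal.ofReal_mul (Nat.cast_nonneg N),
        ← ENNReal.ofReal_add (pow_nonneg (by linarith) d) (by positivity)] at h2
      exact (ENNReal.ofReal_le_ofReal_iff
        (add_nonneg (pow_nonneg (by linarith) d) (by positivity))).1 h2
    have hNI : (N:ℝ) * (∫ x in ball x₀ ρ, v x) ≤ W := by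
      have hdisj : (↑t : Set (EuclideanSpace ℝ (Fin d))).Pairwise
          (Function.onFun Disjoint fun a => ball a ρ) := by
        intro a ha b hb hab
        exact ball_disjoint_ball (by have := hmpair (htm ha) (htm hb) hab; linarith)
      have hIa : ∀ a ∈ t, IntegrableOn v (ball a ρ) volume :=
        fun a _ => (hloc.integrableOn_isCompact (isCompact_closedBall a ρ)).mono_set
          ball_subset_closedBall
      have hsum := integral_biUnion_finset t (f := v) (μ := volume)
        (fun a _ => measurableSet_ball) hdisj hIa
      have heach : ∀ a ∈ t, (∫ x in ball a ρ, v x) = ∫ x in ball x₀ ρ, v x := by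
        intro a hat
        exact radial_int_ball v V hV (by rw [hmnorm a (htm hat)]) ρ
      have hmono : (∫ x in ⋃ a ∈ t, ball a ρ, v x) ≤ W :=
        setIntegral_mono_set (hInt _) (hvnn _)
          (HasSubset.Subset.eventuallyLE (Set.iUnion₂_subset fun a ha => hsub2r a (htm ha)))
      rw [hsum, Finset.sum_congr rfl heach, Finset.sum_const, nsmul_eq_mul] at hmono
      exact hmono
    exact far_alg d hd κ ρ r _ W N hρ hfar.le hκ1 hInn hWnn hNI hvol2

end

/-- For radial nonnegative functions the homogeneous Morrey norm `M^{d/κ}` is equivalent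
to the supremum over balls centered at the origin. -/
theorem morrey_radial_equiv (d : ℕ) (hd : 2 ≤ d) :
    ∃ c : ℝ, c ∈ Set.Ioo (0:ℝ) 1 ∧
      ∀ κ : ℝ, κ ∈ Set.Ico (1:ℝ) (d:ℝ) →
        ∀ v : EuclideanSpace ℝ (Fin d) → ℝ, (∀ x, 0 ≤ v x) →
          (∃ V : ℝ → ℝ, ∀ x, v x = V ‖x‖) →
          LocallyIntegrable v volume →
          ENNReal.ofReal c *
              (⨆ (x₀ : EuclideanSpace ℝ (Fin d)) (ρ : ℝ) (_ : 0 < ρ),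
                ENNReal.ofReal (ρ ^ (κ - d) * ∫ x in Metric.ball x₀ ρ, v x)) ≤
            (⨆ (R : ℝ) (_ : 0 < R),
                ENNReal.ofReal (R ^ (κ - d) * ∫ x in Metric.ball (0 : EuclideanSpace ℝ (Fin d)) R, v x)) ∧
          (⨆ (R : ℝ) (_ : 0 < R),
                ENNReal.ofReal (R ^ (κ - d) * ∫ x in Metric.ball (0 : EuclideanSpace ℝ (Fin d)) R, v x)) ≤
            ⨆ (x₀ : EuclideanSpace ℝ (Fin d)) (ρ : ℝ) (_ : 0 < ρ),
              ENNReal.ofReal (ρ ^ (κ - d) * ∫ x in Metric.ball x₀ ρ, v x) := by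
  have h12 : (0:ℝ) < 12^d := by positivity
  refine ⟨((12:ℝ)^d)⁻¹, ⟨by positivity, ?_⟩, ?_⟩
  · rw [inv_lt_one_iff₀]
    right
    exact one_lt_pow₀ (by norm_num) (by omega)
  intro κ hκ v hv hrad hloc
  obtain ⟨V, hV⟩ := hrad
  constructor
  · rw [ENNReal.mul_iSup]
    refine iSup_le fun x₀ => ?_
    rw [ENNReal.mul_iSup]
    refine iSup_le fun ρ => ?_
    rw [ENNReal.mul_iSup]
    refine iSup_le fun hρ => ?_
    obtain ⟨R, hR, hkey⟩ := key hd κ hκ.1 hκ.2.le v hv V hV hloc x₀ hρ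
    have step : ((12:ℝ)^d)⁻¹ * (ρ^(κ-(d:ℝ)) * ∫ x in Metric.ball x₀ ρ, v x)
        ≤ R^(κ-(d:ℝ)) * ∫ x in Metric.ball (0:EuclideanSpace ℝ (Fin d)) R, v x := by
      have h1 := mul_le_mul_of_nonneg_left hkey
        (by positivity : (0:ℝ) ≤ ((12:ℝ)^d)⁻¹)
      calc ((12:ℝ)^d)⁻¹ * (ρ^(κ-(d:ℝ)) * ∫ x in Metric.ball x₀ ρ, v x)
          ≤ ((12:ℝ)^d)⁻¹ * (12^d * (R^(κ-(d:ℝ)) *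
              ∫ x in Metric.ball (0:EuclideanSpace ℝ (Fin d)) R, v x)) := h1
        _ = R^(κ-(d:ℝ)) * ∫ x in Metric.ball (0:EuclideanSpace ℝ (Fin d)) R, v x := by
            field_simp
    calc ENNReal.ofReal (((12:ℝ)^d)⁻¹) *
          ENNReal.ofReal (ρ^(κ-(d:ℝ)) * ∫ x in Metric.ball x₀ ρ, v x)
        = ENNReal.ofReal (((12:ℝ)^d)⁻¹ *
            (ρ^(κ-(d:ℝ)) * ∫ x in Metric.ball x₀ ρ, v x)) :=
          (ENNReal.ofReal_mul (by positivity)).symm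
      _ ≤ ENNReal.ofReal (R^(κ-(d:ℝ)) *
            ∫ x in Metric.ball (0:EuclideanSpace ℝ (Fin d)) R, v x) :=
          ENNReal.ofReal_le_ofReal step
      _ ≤ ⨆ (R' : ℝ) (_ : 0 < R'),
            ENNReal.ofReal (R' ^ (κ - (d:ℝ)) *
              ∫ x in Metric.ball (0 : EuclideanSpace ℝ (Fin d)) R', v x) :=
          le_iSup_of_le R (le_iSup_of_le hR le_rfl)
  · refine iSup_le fun R => iSup_le fun hR => ?_
    exact le_iSup_of_le (0:EuclideanSpace ℝ (Fin d))
      (le_iSup_of_le R (le_iSup_of_le hR le_rfl))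
end

section
/- Let d ≥ 3 be an integer and α ∈ (0,2). Then for every measurable function M : [0,1] → [0,∞), ((α+2) ∫_0^1 M(r) r (1−r²)^{α/2} dr)² ≤ ((α+2)²/(d−2)) · (∫_0^1 r^{1+d}(1−r²)^{α/2} dr) · (∫_0^1 M(r)² r^{1−d} (1−r²)^{α/2−1} ((d−2) − (d−2−α) r²) dr). -/
open MeasureTheory Real

/-- Cauchy–Schwarz inequality for the radial distribution function, converting the moment
evolution inequality into a quadratic differential inequality. -/
theorem cauchy_schwarz_moment (d : ℕ) (hd : 3 ≤ d) (α : ℝ) (hα : α ∈ Set.Ioo (0:ℝ) 2)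
    (M : ℝ → ℝ) (hmeas : Measurable M) (hpos : ∀ r ∈ Set.Icc (0:ℝ) 1, 0 ≤ M r) :
    (ENNReal.ofReal (α + 2) *
        ∫⁻ r in Set.Ioo (0:ℝ) 1, ENNReal.ofReal (M r * r * (1 - r ^ 2) ^ (α / 2))) ^ 2 ≤
      ENNReal.ofReal ((α + 2) ^ 2 / ((d : ℝ) - 2)) *
        (∫⁻ r in Set.Ioo (0:ℝ) 1, ENNReal.ofReal (r ^ (1 + (d : ℝ)) * (1 - r ^ 2) ^ (α / 2))) *
        ∫⁻ r in Set.Ioo (0:ℝ) 1,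
          ENNReal.ofReal ((M r) ^ 2 * r ^ ((1 : ℝ) - d) * (1 - r ^ 2) ^ (α / 2 - 1) *
            (((d : ℝ) - 2) - ((d : ℝ) - 2 - α) * r ^ 2)) := by
  obtain ⟨hα0, hα2⟩ := hα
  have hd2 : (1:ℝ) ≤ (d:ℝ) - 2 := by
    have : (3:ℝ) ≤ (d:ℝ) := by exact_mod_cast hd
    linarith
  have hd2nn : (0:ℝ) ≤ (d:ℝ) - 2 := by linarith
  set s : Set ℝ := Set.Ioo (0:ℝ) 1 with hs
  set f2 : ℝ → ℝ := fun r => r ^ (1 + (d : ℝ)) * (1 - r ^ 2) ^ (α / 2) with hf2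
  set g2 : ℝ → ℝ := fun r => (M r) ^ 2 * r ^ ((1 : ℝ) - d) * (1 - r ^ 2) ^ (α / 2 - 1) *
      (((d : ℝ) - 2) - ((d : ℝ) - 2 - α) * r ^ 2) with hg2
  set h : ℝ → ℝ := fun r => M r * r * (1 - r ^ 2) ^ (α / 2) with hh
  -- basic pointwise facts
  have hu_pos : ∀ r ∈ s, (0:ℝ) < 1 - r ^ 2 := by
    rintro r ⟨hr0, hr1⟩; nlinarith
  have hf2nn : ∀ r ∈ s, 0 ≤ f2 r := by
    rintro r hr
    exact mul_nonneg (Real.rpow_nonneg hr.1.le _) (Real.rpow_nonneg (hu_pos r hr).le _)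
  have hMnn : ∀ r ∈ s, 0 ≤ M r := by
    rintro r ⟨hr0, hr1⟩; exact hpos r ⟨hr0.le, hr1.le⟩
  have hhnn : ∀ r ∈ s, 0 ≤ h r := by
    rintro r hr
    exact mul_nonneg (mul_nonneg (hMnn r hr) hr.1.le) (Real.rpow_nonneg (hu_pos r hr).le _)
  have hg2nn : ∀ r ∈ s, 0 ≤ g2 r := by
    rintro r hr
    have hu := hu_pos r hr
    have hQ : 0 ≤ ((d : ℝ) - 2) - ((d : ℝ) - 2 - α) * r ^ 2 := by nlinarith [hr.1, hr.2]
    have : (0:ℝ) ≤ (M r) ^ 2 * r ^ ((1 : ℝ) - d) * (1 - r ^ 2) ^ (α / 2 - 1) :=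
      mul_nonneg (mul_nonneg (sq_nonneg _) (Real.rpow_nonneg hr.1.le _))
        (Real.rpow_nonneg hu.le _)
    exact mul_nonneg this hQ
  -- the key real inequality
  have key : ∀ r ∈ s, ((d:ℝ) - 2) * h r ^ 2 ≤ f2 r * g2 r := by
    rintro r hr
    obtain ⟨hr0, hr1⟩ := hr
    have hu : (0:ℝ) < 1 - r ^ 2 := hu_pos r ⟨hr0, hr1⟩
    have hrr : r ^ (1 + (d:ℝ)) * r ^ ((1:ℝ) - d) = r ^ 2 := by
      rw [← Real.rpow_natCast r 2, ← Real.rpow_add hr0]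
      norm_num
    have hab : (1 - r ^ 2) ^ (α / 2) * (1 - r ^ 2) ^ (α / 2 - 1) = (1 - r ^ 2) ^ (α - 1) := by
      rw [← Real.rpow_add hu]; ring_nf
    have habc : (1 - r ^ 2) ^ (α / 2) * (1 - r ^ 2) ^ (α / 2)
        = (1 - r ^ 2) ^ (α - 1) * (1 - r ^ 2) := by
      rw [← Real.rpow_add hu]
      nth_rewrite 3 [← Real.rpow_one (1 - r ^ 2)]
      rw [← Real.rpow_add hu]
      ring_nf
    have hQ : ((d:ℝ) - 2) * (1 - r ^ 2) ≤ ((d : ℝ) - 2) - ((d : ℝ) - 2 - α) * r ^ 2 := by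
      nlinarith [sq_nonneg r]
    have hcnn : (0:ℝ) ≤ (M r) ^ 2 * r ^ 2 * (1 - r ^ 2) ^ (α - 1) :=
      mul_nonneg (mul_nonneg (sq_nonneg _) (sq_nonneg _)) (Real.rpow_nonneg hu.le _)
    calc ((d:ℝ) - 2) * h r ^ 2
        = ((M r) ^ 2 * r ^ 2 * (1 - r ^ 2) ^ (α - 1)) * (((d:ℝ) - 2) * (1 - r ^ 2)) := by
          simp only [hh]
          linear_combination ((d:ℝ) - 2) * (M r) ^ 2 * r ^ 2 * habc
      _ ≤ ((M r) ^ 2 * r ^ 2 * (1 - r ^ 2) ^ (α - 1)) *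
            (((d : ℝ) - 2) - ((d : ℝ) - 2 - α) * r ^ 2) := by
          exact mul_le_mul_of_nonneg_left hQ hcnn
      _ = f2 r * g2 r := by
          simp only [hf2, hg2]
          linear_combination
            (-((M r) ^ 2 * ((((d : ℝ) - 2) - ((d : ℝ) - 2 - α) * r ^ 2)) *
              ((1 - r ^ 2) ^ (α / 2) * (1 - r ^ 2) ^ (α / 2 - 1)))) * hrr +
            (-((M r) ^ 2 * ((((d : ℝ) - 2) - ((d : ℝ) - 2 - α) * r ^ 2)) * r ^ 2)) * hab
  -- the ENNReal-valued functions for Hölder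
  set φ : ℝ → ENNReal := fun r => ENNReal.ofReal (Real.sqrt (f2 r)) with hφdef
  set ψ : ℝ → ENNReal := fun r => ENNReal.ofReal (Real.sqrt (g2 r)) with hψdef
  have hf2meas : Measurable f2 := by
    apply Measurable.mul
    · exact measurable_id.pow measurable_const
    · exact (measurable_const.sub (measurable_id.pow_const 2)).pow measurable_const
  have hg2meas : Measurable g2 := by
    apply Measurable.mul
    apply Measurable.mul
    apply Measurable.mul
    · exact hmeas.pow_const 2
    · exact measurable_id.pow measurable_const
    · exact (measurable_const.sub (measurable_id.pow_const 2)).pow measurable_const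
    · exact measurable_const.sub (measurable_const.mul (measurable_id.pow_const 2))
  have hφmeas : Measurable φ := (hf2meas.sqrt).ennreal_ofReal
  have hψmeas : Measurable ψ := (hg2meas.sqrt).ennreal_ofReal
  -- Hölder
  have hpq : Real.HolderConjugate 2 2 := Real.holderConjugate_iff.mpr ⟨one_lt_two, by norm_num⟩
  have holder := ENNReal.lintegral_mul_le_Lp_mul_Lq (volume.restrict s) hpq
    hφmeas.aemeasurable hψmeas.aemeasurable
  -- identify the squared integrals
  set A := ∫⁻ r in s, ENNReal.ofReal (f2 r) with hA
  set B := ∫⁻ r in s, ENNReal.ofReal (g2 r) with hB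
  set I := ∫⁻ r in s, ENNReal.ofReal (h r) with hI
  have hAeq : ∫⁻ r in s, φ r ^ (2:ℝ) = A := by
    apply setLIntegral_congr_fun measurableSet_Ioo
    intro r hr
    simp only [hφdef]
    rw [ENNReal.ofReal_rpow_of_nonneg (Real.sqrt_nonneg _) (by norm_num)]
    rw [Real.rpow_two, Real.sq_sqrt (hf2nn r hr)]
  have hBeq : ∫⁻ r in s, ψ r ^ (2:ℝ) = B := by
    apply setLIntegral_congr_fun measurableSet_Ioo
    intro r hr
    simp only [hψdef]
    rw [ENNReal.ofReal_rpow_of_nonneg (Real.sqrt_nonneg _) (by norm_num)]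
    rw [Real.rpow_two, Real.sq_sqrt (hg2nn r hr)]
  -- pointwise comparison with the product
  have hpt : ∀ r ∈ s, ENNReal.ofReal (Real.sqrt ((d:ℝ) - 2) * h r) ≤ (φ * ψ) r := by
    intro r hr
    have h1 : (φ * ψ) r = ENNReal.ofReal (Real.sqrt (f2 r) * Real.sqrt (g2 r)) := by
      simp [hφdef, hψdef, ENNReal.ofReal_mul (Real.sqrt_nonneg _)]
    rw [h1]
    apply ENNReal.ofReal_le_ofReal
    rw [← Real.sqrt_mul (hf2nn r hr)]
    have h2 : Real.sqrt ((d:ℝ) - 2) * h r = Real.sqrt (((d:ℝ) - 2) * h r ^ 2) := by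
      rw [Real.sqrt_mul hd2nn, Real.sqrt_sq (hhnn r hr)]
    rw [h2]
    exact Real.sqrt_le_sqrt (key r hr)
  have hmono : ∫⁻ r in s, ENNReal.ofReal (Real.sqrt ((d:ℝ) - 2) * h r)
      ≤ ∫⁻ r in s, (φ * ψ) r :=
    setLIntegral_mono (hφmeas.mul hψmeas) hpt
  have hconst : ∫⁻ r in s, ENNReal.ofReal (Real.sqrt ((d:ℝ) - 2) * h r)
      = ENNReal.ofReal (Real.sqrt ((d:ℝ) - 2)) * I := by
    simp_rw [ENNReal.ofReal_mul (Real.sqrt_nonneg _)]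
    exact lintegral_const_mul' _ _ ENNReal.ofReal_ne_top
  have main : ENNReal.ofReal (Real.sqrt ((d:ℝ) - 2)) * I ≤ A ^ ((1:ℝ)/2) * B ^ ((1:ℝ)/2) := by
    rw [← hconst]
    exact hmono.trans (holder.trans_eq (by rw [hAeq, hBeq]))
  -- square the inequality
  have sqhalf : ∀ x : ENNReal, x ^ ((1:ℝ)/2) * x ^ ((1:ℝ)/2) = x := by
    intro x
    rw [← ENNReal.rpow_add_of_nonneg _ _ (by norm_num) (by norm_num)]
    norm_num
  have main2 : ENNReal.ofReal ((d:ℝ) - 2) * (I * I) ≤ A * B := by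
    calc ENNReal.ofReal ((d:ℝ) - 2) * (I * I)
        = (ENNReal.ofReal (Real.sqrt ((d:ℝ) - 2)) * I) *
          (ENNReal.ofReal (Real.sqrt ((d:ℝ) - 2)) * I) := by
          rw [mul_mul_mul_comm, ← ENNReal.ofReal_mul (Real.sqrt_nonneg _),
            Real.mul_self_sqrt hd2nn]
      _ ≤ (A ^ ((1:ℝ)/2) * B ^ ((1:ℝ)/2)) * (A ^ ((1:ℝ)/2) * B ^ ((1:ℝ)/2)) :=
          mul_le_mul' main main
      _ = A * B := by rw [mul_mul_mul_comm, sqhalf, sqhalf]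
  -- conclude
  have hne : ((d:ℝ) - 2) ≠ 0 := by linarith
  calc (ENNReal.ofReal (α + 2) * I) ^ 2
      = ENNReal.ofReal ((α + 2) ^ 2 / ((d : ℝ) - 2)) * (ENNReal.ofReal ((d:ℝ) - 2) * (I * I)) := by
        rw [mul_pow, ← mul_assoc, ← ENNReal.ofReal_mul (by positivity)]
        rw [div_mul_cancel₀ _ hne, ← ENNReal.ofReal_pow (by linarith), sq I]
    _ ≤ ENNReal.ofReal ((α + 2) ^ 2 / ((d : ℝ) - 2)) * (A * B) := mul_le_mul_right main2 _
    _ = ENNReal.ofReal ((α + 2) ^ 2 / ((d : ℝ) - 2)) * A * B := (mul_assoc _ _ _).symm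
end
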